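/- Let σ = (1/(d+1)) Φ_d + (d/(d+1)) (1/d²) I be the separable isotropic state on C^d ⊗ C^d. Then for every PPT measurement M (all POVM elements positive under partial transpose), D(M(Φ_d)||M(σ)) ≤ log((d+1)/2); consequently E_{r,PPT}(Φ_d) ≤ log(d+1) − 1. -/

import Mathlib

open Matrix Filter
open scoped Kronecker ENNReal Classical ComplexOrder

noncomputable section

namespace QIT

/-- A (finite-dimensional) quantum state: positive semidefinite with unit trace. -/
def IsState {d : Type} [Fintype d] (ρ : Matrix d d ℂ) : Prop :=
  ρ.PosSemidef ∧ ρ.trace = 1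

/-- Partial trace over the first tensor factor. -/
def ptrFst {X Y : Type} [Fintype X] (M : Matrix (X × Y) (X × Y) ℂ) : Matrix Y Y ℂ :=
  Matrix.of fun b b' => ∑ a, M (a, b) (a, b')

/-- Partial trace over the second tensor factor. -/
def ptrSnd {X Y : Type} [Fintype Y] (M : Matrix (X × Y) (X × Y) ℂ) : Matrix X X ℂ :=
  Matrix.of fun a a' => ∑ b, M (a, b) (a', b)

/-- For a tripartite state on (A ⊗ B) ⊗ E, trace out the middle factor B, giving A ⊗ E. -/
def ptrMid {X Y Z : Type} [Fintype Y] (M : Matrix ((X × Y) × Z) ((X × Y) × Z) ℂ) :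
    Matrix (X × Z) (X × Z) ℂ :=
  Matrix.of fun p q => ∑ b, M ((p.1, b), p.2) ((q.1, b), q.2)

/-- For a tripartite state on (A ⊗ B) ⊗ E, trace out the leftmost factor A, giving B ⊗ E. -/
def ptrLeft {X Y Z : Type} [Fintype X] (M : Matrix ((X × Y) × Z) ((X × Y) × Z) ℂ) :
    Matrix (Y × Z) (Y × Z) ℂ :=
  Matrix.of fun p q => ∑ a, M ((a, p.1), p.2) ((a, q.1), q.2)

/-- Separable states on a bipartite system. -/
def IsSeparable {X Y : Type} [Fintype X] [Fintype Y]
    (σ : Matrix (X × Y) (X × Y) ℂ) : Prop :=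
  ∃ (n : ℕ) (p : Fin n → ℝ) (ρ1 : Fin n → Matrix X X ℂ) (ρ2 : Fin n → Matrix Y Y ℂ),
    (∀ i, 0 ≤ p i) ∧ (∑ i, p i) = 1 ∧ (∀ i, IsState (ρ1 i)) ∧ (∀ i, IsState (ρ2 i)) ∧
    σ = ∑ i, (p i : ℂ) • (ρ1 i ⊗ₖ ρ2 i)

/-- Matrix logarithm (base 2) of a Hermitian matrix via the spectral decomposition,
with the convention log 0 = 0 on the kernel; junk value 0 on non-Hermitian input. -/
def matLogb {d : Type} [Fintype d] [DecidableEq d] (A : Matrix d d ℂ) : Matrix d d ℂ :=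
  if h : A.IsHermitian then
    (h.eigenvectorUnitary : Matrix d d ℂ) *
      Matrix.diagonal (fun i => ((Real.logb 2 (h.eigenvalues i) : ℝ) : ℂ)) *
      star (h.eigenvectorUnitary : Matrix d d ℂ)
  else 0

/-- Quantum relative entropy (base 2), +∞ if the support condition fails.  (For positive
semidefinite `σ`, the condition `∀ v, σ v = 0 → ρ v = 0` on kernels is equivalent to
supp ρ ⊆ supp σ.) -/
def qRelEnt {d : Type} [Fintype d] [DecidableEq d] (ρ σ : Matrix d d ℂ) : ℝ≥0∞ :=
  if ∀ v : d → ℂ, σ.mulVec v = 0 → ρ.mulVec v = 0 then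
    ENNReal.ofReal ((ρ * (matLogb ρ - matLogb σ)).trace.re)
  else ⊤

/-- Relative entropy of entanglement. -/
def Er {X Y : Type} [Fintype X] [DecidableEq X] [Fintype Y] [DecidableEq Y]
    (ρ : Matrix (X × Y) (X × Y) ℂ) : ℝ≥0∞ :=
  ⨅ (σ : Matrix (X × Y) (X × Y) ℂ) (_ : IsSeparable σ), qRelEnt ρ σ

/-- n-fold tensor power of a bipartite state, arranged as a state on Aⁿ ⊗ Bⁿ. -/
def tpow {X Y : Type} (ρ : Matrix (X × Y) (X × Y) ℂ) (n : ℕ) :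
    Matrix ((Fin n → X) × (Fin n → Y)) ((Fin n → X) × (Fin n → Y)) ℂ :=
  Matrix.of fun x y => ∏ i, ρ (x.1 i, x.2 i) (y.1 i, y.2 i)

/-- n-fold tensor power of a tripartite state on (A⊗B)⊗E, arranged on (Aⁿ⊗Bⁿ)⊗Eⁿ. -/
def tpow3 {X Y Z : Type} (ρ : Matrix ((X × Y) × Z) ((X × Y) × Z) ℂ) (n : ℕ) :
    Matrix (((Fin n → X) × (Fin n → Y)) × (Fin n → Z))
           (((Fin n → X) × (Fin n → Y)) × (Fin n → Z)) ℂ :=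
  Matrix.of fun u v => ∏ i, ρ ((u.1.1 i, u.1.2 i), u.2 i) ((v.1.1 i, v.1.2 i), v.2 i)

/-- Regularized relative entropy of entanglement. -/
def ErReg {X Y : Type} [Fintype X] [DecidableEq X] [Fintype Y] [DecidableEq Y]
    (ρ : Matrix (X × Y) (X × Y) ℂ) : ℝ≥0∞ :=
  Filter.limsup (fun n : ℕ => Er (tpow ρ n) / (n : ℝ≥0∞)) Filter.atTop

/-- Classical relative entropy (base 2) of two finitely supported "probability vectors". -/
def klDiv2 {X : Type} [Fintype X] (P Q : X → ℝ) : ℝ≥0∞ :=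
  if ∀ x, Q x = 0 → P x = 0 then
    ENNReal.ofReal (∑ x, P x * Real.logb 2 (P x / Q x))
  else ⊤

/-- Outcome distribution of a POVM on a state. -/
def mProb {d X : Type} [Fintype d] (M : X → Matrix d d ℂ) (ρ : Matrix d d ℂ) : X → ℝ :=
  fun x => ((ρ * M x).trace).re

/-- POVM condition. -/
def IsPOVM {d X : Type} [Fintype d] [DecidableEq d] [Fintype X]
    (M : X → Matrix d d ℂ) : Prop :=
  (∀ x, (M x).PosSemidef) ∧ (∑ x, M x) = 1

/-- Conditions for a one-way (A→B) LOCC measurement with POVM elements R_k ⊗ S_{k,ℓ}. -/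
def OneLOCCData {X Y : Type} [Fintype X] [DecidableEq X] [Fintype Y] [DecidableEq Y]
    {k l : ℕ} (R : Fin k → Matrix X X ℂ) (S : Fin k → Fin l → Matrix Y Y ℂ) : Prop :=
  (∀ i, (R i).PosSemidef) ∧ (∑ i, R i) = 1 ∧
    (∀ i j, (S i j).PosSemidef) ∧ (∀ i, (∑ j, S i j) = 1)

/-- The POVM of a one-way LOCC measurement. -/
def oneLOCCPOVM {X Y : Type} {k l : ℕ} (R : Fin k → Matrix X X ℂ)
    (S : Fin k → Fin l → Matrix Y Y ℂ) : Fin k × Fin l → Matrix (X × Y) (X × Y) ℂ :=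
  fun p => R p.1 ⊗ₖ S p.1 p.2

/-- One-way-LOCC restricted relative entropy of entanglement E_{r,1-LOCC}. -/
def ErOneLOCC {X Y : Type} [Fintype X] [DecidableEq X] [Fintype Y] [DecidableEq Y]
    (ρ : Matrix (X × Y) (X × Y) ℂ) : ℝ≥0∞ :=
  ⨅ (σ : Matrix (X × Y) (X × Y) ℂ) (_ : IsSeparable σ),
    ⨆ (k : ℕ) (l : ℕ) (R : Fin k → Matrix X X ℂ) (S : Fin k → Fin l → Matrix Y Y ℂ)
      (_ : OneLOCCData R S),
      klDiv2 (mProb (oneLOCCPOVM R S) ρ) (mProb (oneLOCCPOVM R S) σ)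

/-- Regularized E_{r,1-LOCC}. -/
def ErOneLOCCReg {X Y : Type} [Fintype X] [DecidableEq X] [Fintype Y] [DecidableEq Y]
    (ρ : Matrix (X × Y) (X × Y) ℂ) : ℝ≥0∞ :=
  Filter.limsup (fun n : ℕ => ErOneLOCC (tpow ρ n) / (n : ℝ≥0∞)) Filter.atTop

/-- LO (product) restricted relative entropy of entanglement E_{r,LO}. -/
def ErLO {X Y : Type} [Fintype X] [DecidableEq X] [Fintype Y] [DecidableEq Y]
    (ρ : Matrix (X × Y) (X × Y) ℂ) : ℝ≥0∞ :=
  ⨅ (σ : Matrix (X × Y) (X × Y) ℂ) (_ : IsSeparable σ),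
    ⨆ (k : ℕ) (l : ℕ) (R : Fin k → Matrix X X ℂ) (S : Fin l → Matrix Y Y ℂ)
      (_ : (∀ i, (R i).PosSemidef) ∧ (∑ i, R i) = 1 ∧
            (∀ j, (S j).PosSemidef) ∧ (∑ j, S j) = 1),
      klDiv2 (mProb (fun p : Fin k × Fin l => R p.1 ⊗ₖ S p.2) ρ)
             (mProb (fun p : Fin k × Fin l => R p.1 ⊗ₖ S p.2) σ)

def ErLOReg {X Y : Type} [Fintype X] [DecidableEq X] [Fintype Y] [DecidableEq Y]
    (ρ : Matrix (X × Y) (X × Y) ℂ) : ℝ≥0∞ :=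
  Filter.limsup (fun n : ℕ => ErLO (tpow ρ n) / (n : ℝ≥0∞)) Filter.atTop

/-- Families of pairs of local Kraus-operator products realizable by a finite-round
LOCC protocol (with two-way classical communication) on a bipartite system. -/
inductive LOCCFam (dA dB : Type) [Fintype dA] [DecidableEq dA] [Fintype dB] [DecidableEq dB] :
    (dA' dB' X : Type) → (X → Matrix dA' dA ℂ) → (X → Matrix dB' dB ℂ) → Prop
  | base : LOCCFam dA dB dA dB PUnit (fun _ => 1) (fun _ => 1)
  | stepA {dA' dB' X : Type} {a : X → Matrix dA' dA ℂ} {b : X → Matrix dB' dB ℂ}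
      (h : LOCCFam dA dB dA' dB' X a b)
      {dA'' K : Type} [Fintype dA'] [DecidableEq dA'] [Fintype dA''] [Fintype K]
      (κ : X → K → Matrix dA'' dA' ℂ)
      (hκ : ∀ x, (∑ j, (κ x j)ᴴ * κ x j) = (1 : Matrix dA' dA' ℂ)) :
      LOCCFam dA dB dA'' dB' (X × K) (fun p => κ p.1 p.2 * a p.1) (fun p => b p.1)
  | stepB {dA' dB' X : Type} {a : X → Matrix dA' dA ℂ} {b : X → Matrix dB' dB ℂ}
      (h : LOCCFam dA dB dA' dB' X a b)
      {dB'' K : Type} [Fintype dB'] [DecidableEq dB'] [Fintype dB''] [Fintype K]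
      (κ : X → K → Matrix dB'' dB' ℂ)
      (hκ : ∀ x, (∑ j, (κ x j)ᴴ * κ x j) = (1 : Matrix dB' dB' ℂ)) :
      LOCCFam dA dB dA' dB'' (X × K) (fun p => a p.1) (fun p => κ p.1 p.2 * b p.1)
  | relabel {dA' dB' X : Type} {a : X → Matrix dA' dA ℂ} {b : X → Matrix dB' dB ℂ}
      (h : LOCCFam dA dB dA' dB' X a b) {Y : Type} (e : Y ≃ X) :
      LOCCFam dA dB dA' dB' Y (fun y => a (e y)) (fun y => b (e y))

/-- A POVM implementable by (two-way) LOCC: outcomes are coarse-grainings of the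
histories of an LOCC protocol, with POVM elements (aᴴa) ⊗ (bᴴb). -/
def IsLOCCPOVM {X Y : Type} [Fintype X] [DecidableEq X] [Fintype Y] [DecidableEq Y]
    {m : ℕ} (M : Fin m → Matrix (X × Y) (X × Y) ℂ) : Prop :=
  ∃ (p q n : ℕ) (a : Fin n → Matrix (Fin p) X ℂ) (b : Fin n → Matrix (Fin q) Y ℂ)
    (g : Fin n → Fin m),
    LOCCFam X Y (Fin p) (Fin q) (Fin n) a b ∧
    ∀ y, M y = ∑ x ∈ Finset.univ.filter (fun x => g x = y),
                  ((a x)ᴴ * a x) ⊗ₖ ((b x)ᴴ * b x)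

/-- LOCC restricted relative entropy of entanglement E_{r,LOCC}. -/
def ErLOCC {X Y : Type} [Fintype X] [DecidableEq X] [Fintype Y] [DecidableEq Y]
    (ρ : Matrix (X × Y) (X × Y) ℂ) : ℝ≥0∞ :=
  ⨅ (σ : Matrix (X × Y) (X × Y) ℂ) (_ : IsSeparable σ),
    ⨆ (m : ℕ) (M : Fin m → Matrix (X × Y) (X × Y) ℂ) (_ : IsLOCCPOVM M),
      klDiv2 (mProb M ρ) (mProb M σ)

def ErLOCCReg {X Y : Type} [Fintype X] [DecidableEq X] [Fintype Y] [DecidableEq Y]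
    (ρ : Matrix (X × Y) (X × Y) ℂ) : ℝ≥0∞ :=
  Filter.limsup (fun n : ℕ => ErLOCC (tpow ρ n) / (n : ℝ≥0∞)) Filter.atTop

/-- Separable (positive) operator. -/
def IsSepOp {X Y : Type} [Fintype X] [Fintype Y] (Q : Matrix (X × Y) (X × Y) ℂ) : Prop :=
  ∃ (n : ℕ) (a : Fin n → Matrix X X ℂ) (b : Fin n → Matrix Y Y ℂ),
    (∀ i, (a i).PosSemidef) ∧ (∀ i, (b i).PosSemidef) ∧ Q = ∑ i, a i ⊗ₖ b i

/-- SEP restricted relative entropy of entanglement E_{r,SEP}. -/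
def ErSEP {X Y : Type} [Fintype X] [DecidableEq X] [Fintype Y] [DecidableEq Y]
    (ρ : Matrix (X × Y) (X × Y) ℂ) : ℝ≥0∞ :=
  ⨅ (σ : Matrix (X × Y) (X × Y) ℂ) (_ : IsSeparable σ),
    ⨆ (m : ℕ) (M : Fin m → Matrix (X × Y) (X × Y) ℂ)
      (_ : IsPOVM M ∧ ∀ x, IsSepOp (M x)),
      klDiv2 (mProb M ρ) (mProb M σ)

def ErSEPReg {X Y : Type} [Fintype X] [DecidableEq X] [Fintype Y] [DecidableEq Y]
    (ρ : Matrix (X × Y) (X × Y) ℂ) : ℝ≥0∞ :=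
  Filter.limsup (fun n : ℕ => ErSEP (tpow ρ n) / (n : ℝ≥0∞)) Filter.atTop

/-- Partial transpose on the first factor. -/
def ptranspose {X Y : Type} (Q : Matrix (X × Y) (X × Y) ℂ) : Matrix (X × Y) (X × Y) ℂ :=
  Matrix.of fun p q => Q (q.1, p.2) (p.1, q.2)

/-- PPT restricted relative entropy of entanglement E_{r,PPT}. -/
def ErPPT {X Y : Type} [Fintype X] [DecidableEq X] [Fintype Y] [DecidableEq Y]
    (ρ : Matrix (X × Y) (X × Y) ℂ) : ℝ≥0∞ :=
  ⨅ (σ : Matrix (X × Y) (X × Y) ℂ) (_ : IsSeparable σ),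
    ⨆ (m : ℕ) (M : Fin m → Matrix (X × Y) (X × Y) ℂ)
      (_ : IsPOVM M ∧ ∀ x, (ptranspose (M x)).PosSemidef),
      klDiv2 (mProb M ρ) (mProb M σ)

def ErPPTReg {X Y : Type} [Fintype X] [DecidableEq X] [Fintype Y] [DecidableEq Y]
    (ρ : Matrix (X × Y) (X × Y) ℂ) : ℝ≥0∞ :=
  Filter.limsup (fun n : ℕ => ErPPT (tpow ρ n) / (n : ℝ≥0∞)) Filter.atTop

/-- Von Neumann entropy (base 2), via eigenvalues; junk value 0 on non-Hermitian input. -/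
def vnEntropy {d : Type} [Fintype d] [DecidableEq d] (ρ : Matrix d d ℂ) : ℝ :=
  if h : ρ.IsHermitian then -∑ i, h.eigenvalues i * Real.logb 2 (h.eigenvalues i) else 0

/-- Quantum conditional mutual information I(A;B|E) of a state on (A⊗B)⊗E. -/
def qcmi {X Y Z : Type} [Fintype X] [DecidableEq X] [Fintype Y] [DecidableEq Y]
    [Fintype Z] [DecidableEq Z] (ρ : Matrix ((X × Y) × Z) ((X × Y) × Z) ℂ) : ℝ :=
  vnEntropy (ptrMid ρ) + vnEntropy (ptrLeft ρ) - vnEntropy ρ - vnEntropy (ptrFst ρ)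

/-- Squashed entanglement (infimum over finite-dimensional extensions). -/
def Esq {X Y : Type} [Fintype X] [DecidableEq X] [Fintype Y] [DecidableEq Y]
    (ρ : Matrix (X × Y) (X × Y) ℂ) : ℝ≥0∞ :=
  ⨅ (e : ℕ) (ω : Matrix ((X × Y) × Fin e) ((X × Y) × Fin e) ℂ)
    (_ : IsState ω ∧ ptrSnd ω = ρ),
    ENNReal.ofReal (qcmi ω / 2)

/-- The classical extension Σ_i p_i ρ_i ⊗ |i⟩⟨i| of an ensemble. -/
def classExt {X Y : Type} {m : ℕ} (p : Fin m → ℝ)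
    (ρi : Fin m → Matrix (X × Y) (X × Y) ℂ) :
    Matrix ((X × Y) × Fin m) ((X × Y) × Fin m) ℂ :=
  Matrix.of fun u v => if u.2 = v.2 then (p u.2 : ℂ) * ρi u.2 u.1 v.1 else 0

/-- c-squashed entanglement (infimum over classical extensions). -/
def Esqc {X Y : Type} [Fintype X] [DecidableEq X] [Fintype Y] [DecidableEq Y]
    (ρ : Matrix (X × Y) (X × Y) ℂ) : ℝ≥0∞ :=
  ⨅ (m : ℕ) (p : Fin m → ℝ) (ρi : Fin m → Matrix (X × Y) (X × Y) ℂ)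
    (_ : (∀ i, 0 ≤ p i) ∧ (∑ i, p i) = 1 ∧ (∀ i, IsState (ρi i)) ∧
          (∑ i, (p i : ℂ) • ρi i) = ρ),
    ENNReal.ofReal (qcmi (classExt p ρi) / 2)

def EsqcReg {X Y : Type} [Fintype X] [DecidableEq X] [Fintype Y] [DecidableEq Y]
    (ρ : Matrix (X × Y) (X × Y) ℂ) : ℝ≥0∞ :=
  Filter.limsup (fun n : ℕ => Esqc (tpow ρ n) / (n : ℝ≥0∞)) Filter.atTop

/-- Mutual information I(X;Y) of a bipartite state. -/
def mutInfo {X Y : Type} [Fintype X] [DecidableEq X] [Fintype Y] [DecidableEq Y]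
    (ρ : Matrix (X × Y) (X × Y) ℂ) : ℝ :=
  vnEntropy (ptrSnd ρ) + vnEntropy (ptrFst ρ) - vnEntropy ρ

/-- Marginal on A⊗B of a state on (A⊗A')⊗(B⊗B'). -/
def margMain {X Y : Type} {a b : ℕ}
    (ω : Matrix ((X × Fin a) × (Y × Fin b)) ((X × Fin a) × (Y × Fin b)) ℂ) :
    Matrix (X × Y) (X × Y) ℂ :=
  Matrix.of fun p q => ∑ i, ∑ j, ω ((p.1, i), (p.2, j)) ((q.1, i), (q.2, j))

/-- Marginal on A'⊗B' of a state on (A⊗A')⊗(B⊗B'). -/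
def margAux {X Y : Type} [Fintype X] [Fintype Y] {a b : ℕ}
    (ω : Matrix ((X × Fin a) × (Y × Fin b)) ((X × Fin a) × (Y × Fin b)) ℂ) :
    Matrix (Fin a × Fin b) (Fin a × Fin b) ℂ :=
  Matrix.of fun p q => ∑ x, ∑ y, ω ((x, p.1), (y, p.2)) ((x, q.1), (y, q.2))

/-- Conditional entanglement of mutual information. -/
def EI {X Y : Type} [Fintype X] [DecidableEq X] [Fintype Y] [DecidableEq Y]
    (ρ : Matrix (X × Y) (X × Y) ℂ) : ℝ≥0∞ :=
  ⨅ (a : ℕ) (b : ℕ)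
    (ω : Matrix ((X × Fin a) × (Y × Fin b)) ((X × Fin a) × (Y × Fin b)) ℂ)
    (_ : IsState ω ∧ margMain ω = ρ),
    ENNReal.ofReal ((mutInfo ω - mutInfo (margAux ω)) / 2)

/-- An LOCC quantum channel between bipartite systems. -/
def IsLOCCChannel {X Y X' Y' : Type} [Fintype X] [DecidableEq X] [Fintype Y] [DecidableEq Y]
    [Fintype X'] [Fintype Y']
    (Λ : Matrix (X × Y) (X × Y) ℂ → Matrix (X' × Y') (X' × Y') ℂ) : Prop :=
  ∃ (n : ℕ) (a : Fin n → Matrix X' X ℂ) (b : Fin n → Matrix Y' Y ℂ),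
    LOCCFam X Y X' Y' (Fin n) a b ∧
    ∀ ω, Λ ω = ∑ x, (a x ⊗ₖ b x) * ω * (a x ⊗ₖ b x)ᴴ

/-- E_{r,→}: the LOCC-processed one-way LOCC relative entropy of entanglement. -/
def ErArrow {X Y : Type} [Fintype X] [DecidableEq X] [Fintype Y] [DecidableEq Y]
    (ρ : Matrix (X × Y) (X × Y) ℂ) : ℝ≥0∞ :=
  ⨆ (p : ℕ) (q : ℕ)
    (Λ : Matrix (X × Y) (X × Y) ℂ → Matrix (Fin p × Fin q) (Fin p × Fin q) ℂ)
    (_ : IsLOCCChannel Λ),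
    ErOneLOCC (Λ ρ)

def ErArrowReg {X Y : Type} [Fintype X] [DecidableEq X] [Fintype Y] [DecidableEq Y]
    (ρ : Matrix (X × Y) (X × Y) ℂ) : ℝ≥0∞ :=
  Filter.limsup (fun n : ℕ => ErArrow (tpow ρ n) / (n : ℝ≥0∞)) Filter.atTop

/-- Trace norm of a Hermitian matrix (junk value 0 on non-Hermitian input). -/
def traceNorm {d : Type} [Fintype d] [DecidableEq d] (M : Matrix d d ℂ) : ℝ :=
  if h : M.IsHermitian then ∑ i, |h.eigenvalues i| else 0

/-- The rank-d maximally entangled state Φ_d. -/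
def MES (d : ℕ) : Matrix (Fin d × Fin d) (Fin d × Fin d) ℂ :=
  Matrix.of fun p q => if p.1 = p.2 ∧ q.1 = q.2 then ((d : ℂ))⁻¹ else 0

/-- Distillable entanglement. -/
def Ed {X Y : Type} [Fintype X] [DecidableEq X] [Fintype Y] [DecidableEq Y]
    (ρ : Matrix (X × Y) (X × Y) ℂ) : ℝ≥0∞ :=
  ⨆ (dseq : ℕ → ℕ)
    (Λ : ∀ n : ℕ, Matrix ((Fin n → X) × (Fin n → Y)) ((Fin n → X) × (Fin n → Y)) ℂ →
          Matrix (Fin (dseq n) × Fin (dseq n)) (Fin (dseq n) × Fin (dseq n)) ℂ)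
    (_ : (∀ n, IsLOCCChannel (Λ n)) ∧
         Filter.Tendsto (fun n => traceNorm (Λ n (tpow ρ n) - MES (dseq n)))
           Filter.atTop (nhds 0)),
    Filter.liminf (fun n : ℕ => ENNReal.ofReal (Real.logb 2 (dseq n)) / (n : ℝ≥0∞))
      Filter.atTop

/-- A one-way LOCC (A→B) quantum instrument with classical output `Fin m` and quantum
output on B: Alice applies an instrument with outcomes k and Kraus operators A k i,
communicates k; Bob applies an instrument with classical outcome x and Kraus B k x j. -/
structure OneLOCCInstr (X Y : Type) [Fintype X] [DecidableEq X] [Fintype Y] [DecidableEq Y]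
    (m : ℕ) where
  nK : ℕ
  nI : ℕ
  nJ : ℕ
  A : Fin nK → Fin nI → Matrix X X ℂ
  B : Fin nK → Fin m → Fin nJ → Matrix Y Y ℂ
  hA : (∑ k, ∑ i, (A k i)ᴴ * A k i) = 1
  hB : ∀ k, (∑ x, ∑ j, (B k x j)ᴴ * B k x j) = 1

/-- The x-component of the instrument applied to a state of AB together with an
untouched environment E. -/
def OneLOCCInstr.comp {X Y Z : Type} [Fintype X] [DecidableEq X] [Fintype Y] [DecidableEq Y]
    [Fintype Z] [DecidableEq Z] {m : ℕ} (T : OneLOCCInstr X Y m) (x : Fin m)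
    (ω : Matrix ((X × Y) × Z) ((X × Y) × Z) ℂ) : Matrix (Y × Z) (Y × Z) ℂ :=
  ∑ k, ∑ i, ∑ j,
    ptrLeft (((T.A k i ⊗ₖ T.B k x j) ⊗ₖ (1 : Matrix Z Z ℂ)) * ω *
             ((T.A k i ⊗ₖ T.B k x j) ⊗ₖ (1 : Matrix Z Z ℂ))ᴴ)

/-- The classical output distribution T^c of the instrument on a state of AB. -/
def OneLOCCInstr.cOut {X Y : Type} [Fintype X] [DecidableEq X] [Fintype Y] [DecidableEq Y]
    {m : ℕ} (T : OneLOCCInstr X Y m) (ω : Matrix (X × Y) (X × Y) ℂ) : Fin m → ℝ :=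
  fun x => (∑ k, ∑ i, ∑ j,
    ((T.A k i ⊗ₖ T.B k x j) * ω * (T.A k i ⊗ₖ T.B k x j)ᴴ).trace).re

/-- The quantum output T^q ⊗ id_E of the instrument on a state of (A⊗B)⊗E. -/
def OneLOCCInstr.qOut {X Y Z : Type} [Fintype X] [DecidableEq X] [Fintype Y] [DecidableEq Y]
    [Fintype Z] [DecidableEq Z] {m : ℕ} (T : OneLOCCInstr X Y m)
    (ω : Matrix ((X × Y) × Z) ((X × Y) × Z) ℂ) : Matrix (Y × Z) (Y × Z) ℂ :=
  ∑ x, T.comp x ω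

/-- The maximally mixed state. -/
def maxMixed (d : Type) [Fintype d] [DecidableEq d] : Matrix d d ℂ :=
  ((Fintype.card d : ℂ))⁻¹ • (1 : Matrix d d ℂ)

/-- Relative entropy of "entanglement" w.r.t. a set of states G and a set of
measurements Ms (measurements encoded as pairs of an outcome count and a POVM). -/
def ErG {d : Type} [Fintype d] [DecidableEq d]
    (G : Set (Matrix d d ℂ)) (Ms : Set (Σ m : ℕ, Fin m → Matrix d d ℂ))
    (ρ : Matrix d d ℂ) : ℝ≥0∞ :=
  ⨅ (σ : Matrix d d ℂ) (_ : σ ∈ G),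
    ⨆ (M : Σ m : ℕ, Fin m → Matrix d d ℂ) (_ : M ∈ Ms),
      klDiv2 (mProb M.2 ρ) (mProb M.2 σ)

/-- The distinguishability (pseudo-)norm ‖ρ−ρ'‖_Ms induced by a set of measurements. -/
def distMeas {d : Type} [Fintype d] [DecidableEq d]
    (Ms : Set (Σ m : ℕ, Fin m → Matrix d d ℂ)) (ρ ρ' : Matrix d d ℂ) : ℝ :=
  ⨆ (M : Σ m : ℕ, Fin m → Matrix d d ℂ) (_ : M ∈ Ms),
    ∑ x, |mProb M.2 ρ x - mProb M.2 ρ' x|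

/-- One-way LOCC distinguishability norm ‖ρ−ρ'‖_{1-LOCC}. -/
def oneLOCCDist {X Y : Type} [Fintype X] [DecidableEq X] [Fintype Y] [DecidableEq Y]
    (ρ ρ' : Matrix (X × Y) (X × Y) ℂ) : ℝ :=
  ⨆ (k : ℕ) (l : ℕ) (R : Fin k → Matrix X X ℂ) (S : Fin k → Fin l → Matrix Y Y ℂ)
    (_ : OneLOCCData R S),
    ∑ p, |mProb (oneLOCCPOVM R S) ρ p - mProb (oneLOCCPOVM R S) ρ' p|

/-- Reindexing a tripartite system (A⊗B)⊗E into the bipartite split B : (A⊗E). -/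
def splitBAE {X Y Z : Type} : (X × Y) × Z ≃ Y × (X × Z) where
  toFun := fun u => (u.1.2, (u.1.1, u.2))
  invFun := fun u => ((u.2.1, u.1), u.2.2)
  left_inv := fun _ => rfl
  right_inv := fun _ => rfl

/-- A tripartite state regarded as a bipartite state across B : AE. -/
def asBAE {X Y Z : Type} (ρ : Matrix ((X × Y) × Z) ((X × Y) × Z) ℂ) :
    Matrix (Y × (X × Z)) (Y × (X × Z)) ℂ :=
  Matrix.reindex splitBAE splitBAE ρ

end QIT

open QIT

variable {dA dB dE : Type} [Fintype dA] [DecidableEq dA] [Fintype dB] [DecidableEq dB]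
  [Fintype dE] [DecidableEq dE]


section AuxPPT
open Complex Matrix

variable {n : Type} [Fintype n] [DecidableEq n]

private lemma psdDiagRe {A : Matrix n n ℂ} (hA : A.PosSemidef) (i : n) : 0 ≤ (A i i).re := by
  have h2 := hA.dotProduct_mulVec_nonneg (Pi.single i 1)
  have h3 : dotProduct (star (Pi.single i 1 : n → ℂ)) (A.mulVec (Pi.single i 1)) = A i i := by
    simp [dotProduct, Matrix.mulVec, Pi.single_apply]
  rw [h3, Complex.le_def] at h2
  simpa using h2.1

private lemma psdTraceRe {A : Matrix n n ℂ} (hA : A.PosSemidef) : 0 ≤ A.trace.re := by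
  have : A.trace.re = ∑ i, (A i i).re := by
    simp [Matrix.trace, Matrix.diag, Complex.re_sum]
  rw [this]
  exact Finset.sum_nonneg fun i _ => psdDiagRe hA i

open scoped MatrixOrder in
private lemma psdTraceMulRe {A B : Matrix n n ℂ} (hA : A.PosSemidef) (hB : B.PosSemidef) :
    0 ≤ ((A * B).trace).re := by
  have h2 : (A * B).trace = ((CFC.sqrt A)ᴴ * B * CFC.sqrt A).trace := by
    rw [(CFC.sqrt_nonneg A).posSemidef.1.eq]
    conv_lhs => rw [(CFC.sqrt_mul_sqrt_self A hA.nonneg).symm]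
    rw [Matrix.mul_assoc, Matrix.trace_mul_comm, Matrix.mul_assoc]
  rw [h2]
  exact psdTraceRe (hB.conjTranspose_mul_mul_same (CFC.sqrt A))

private lemma psdSmulReal {c : ℝ} (hc : 0 ≤ c) {A : Matrix n n ℂ} (hA : A.PosSemidef) :
    ((c : ℂ) • A).PosSemidef := by
  refine Matrix.PosSemidef.of_dotProduct_mulVec_nonneg ?_ ?_
  · unfold Matrix.IsHermitian
    rw [Matrix.conjTranspose_smul, hA.1.eq, Complex.star_def, Complex.conj_ofReal]
  · intro x
    rw [Matrix.smul_mulVec, dotProduct_smul, smul_eq_mul]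
    exact mul_nonneg (by exact_mod_cast hc) (hA.dotProduct_mulVec_nonneg x)

/-- The swap (flip) operator on `X ⊗ X`. -/
private def swapM (X : Type) [DecidableEq X] : Matrix (X × X) (X × X) ℂ :=
  Matrix.of fun p q => if p.1 = q.2 ∧ p.2 = q.1 then 1 else 0

variable {X Y : Type} [Fintype X] [DecidableEq X] [Fintype Y] [DecidableEq Y]

private lemma swapM_mulVec (v : X × X → ℂ) :
    (swapM X).mulVec v = fun p => v (p.2, p.1) := by
  funext p
  have : ∀ q : X × X, (p.1 = q.2 ∧ p.2 = q.1) ↔ q = (p.2, p.1) := by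
    intro q; constructor
    · rintro ⟨h1, h2⟩; exact Prod.ext h2.symm h1.symm
    · rintro rfl; exact ⟨rfl, rfl⟩
  simp only [Matrix.mulVec, dotProduct, swapM, Matrix.of_apply, ite_mul, one_mul, zero_mul]
  simp only [this]
  simp

private lemma swapM_herm : (swapM X).IsHermitian := by
  unfold Matrix.IsHermitian
  ext p q
  simp only [Matrix.conjTranspose_apply, swapM, Matrix.of_apply]
  by_cases h : p.1 = q.2 ∧ p.2 = q.1
  · rw [if_pos h, if_pos ⟨h.2.symm, h.1.symm⟩]; simp
  · rw [if_neg h, if_neg (by tauto)]; simp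

private lemma one_sub_swapM_psd : (1 - swapM X).PosSemidef := by
  have hherm : (1 - swapM X).IsHermitian := by
    have := swapM_herm (X := X)
    unfold Matrix.IsHermitian at this ⊢
    rw [Matrix.conjTranspose_sub, this, Matrix.conjTranspose_one]
  refine Matrix.PosSemidef.of_dotProduct_mulVec_nonneg hherm fun v => ?_
  have hmv : (1 - swapM X).mulVec v = fun p => v p - v (p.2, p.1) := by
    funext p
    rw [Matrix.sub_mulVec, swapM_mulVec]
    simp [Matrix.one_mulVec]
  rw [hmv]
  have h1 : ∑ p : X × X, star (v (p.2, p.1)) * v (p.2, p.1) = ∑ p : X × X, star (v p) * v p :=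
    Fintype.sum_equiv (Equiv.prodComm X X) _ _ (fun p => rfl)
  have h2 : ∑ p : X × X, star (v (p.2, p.1)) * v p = ∑ p : X × X, star (v p) * v (p.2, p.1) :=
    Fintype.sum_equiv (Equiv.prodComm X X) _ _ (fun p => rfl)
  have hform : dotProduct (star v) (fun p => v p - v (p.2, p.1))
      = ∑ p : X × X, star (v p) * v p - ∑ p : X × X, star (v p) * v (p.2, p.1) := by
    simp [dotProduct, mul_sub, Finset.sum_sub_distrib]
  have hsq : ∑ p : X × X, star (v p - v (p.2, p.1)) * (v p - v (p.2, p.1))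
      = 2 * (∑ p : X × X, star (v p) * v p - ∑ p : X × X, star (v p) * v (p.2, p.1)) := by
    have hterm : ∀ p : X × X, star (v p - v (p.2, p.1)) * (v p - v (p.2, p.1))
        = star (v p) * v p + star (v (p.2, p.1)) * v (p.2, p.1)
          - star (v (p.2, p.1)) * v p - star (v p) * v (p.2, p.1) := by
      intro p; rw [star_sub]; ring
    rw [Finset.sum_congr rfl (fun p _ => hterm p)]
    rw [Finset.sum_sub_distrib, Finset.sum_sub_distrib, Finset.sum_add_distrib, h1, h2]
    ring
  have hnn : 0 ≤ ∑ p : X × X, star (v p - v (p.2, p.1)) * (v p - v (p.2, p.1)) :=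
    Finset.sum_nonneg fun p _ => star_mul_self_nonneg _
  rw [hsq] at hnn
  have h2inv : 0 ≤ (2:ℂ)⁻¹ := by
    rw [show ((2:ℂ)⁻¹) = (((2:ℝ)⁻¹ : ℝ) : ℂ) by norm_num, Complex.zero_le_real]; norm_num
  have hfin := mul_nonneg h2inv hnn
  rw [show (2:ℂ)⁻¹ * (2 * (∑ p : X × X, star (v p) * v p - ∑ p : X × X, star (v p) * v (p.2, p.1)))
      = ∑ p : X × X, star (v p) * v p - ∑ p : X × X, star (v p) * v (p.2, p.1) by ring] at hfin
  rw [hform]; exact hfin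

/-- For `N` PSD, `Re tr(F·N) ≤ Re tr(N)`. -/
private lemma reTraceSwapMul_le {N : Matrix (X × X) (X × X) ℂ} (hN : N.PosSemidef) :
    ((swapM X * N).trace).re ≤ (N.trace).re := by
  have h := psdTraceMulRe one_sub_swapM_psd hN
  rw [Matrix.sub_mul, Matrix.one_mul, Matrix.trace_sub] at h
  have : ((N.trace) - (swapM X * N).trace).re = N.trace.re - ((swapM X * N).trace).re := by
    simp [Complex.sub_re]
  rw [this] at h
  linarith

private lemma ptranspose_ptranspose {M : Matrix (X × Y) (X × Y) ℂ} :
    ptranspose (ptranspose M) = M := rfl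

private lemma trace_ptranspose (M : Matrix (X × Y) (X × Y) ℂ) :
    (ptranspose M).trace = M.trace := rfl

private lemma trace_ptranspose_mul (A B : Matrix (X × Y) (X × Y) ℂ) :
    (ptranspose A * B).trace = (A * ptranspose B).trace := by
  have key := Fintype.sum_equiv
    (⟨fun z : (X × Y) × (X × Y) => ((z.2.1, z.1.2), (z.1.1, z.2.2)),
      fun z => ((z.2.1, z.1.2), (z.1.1, z.2.2)), fun z => rfl, fun z => rfl⟩ :
        ((X × Y) × (X × Y)) ≃ ((X × Y) × (X × Y)))
    (fun z : (X × Y) × (X × Y) => A (z.2.1, z.1.2) (z.1.1, z.2.2) * B z.2 z.1)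
    (fun z : (X × Y) × (X × Y) => A z.1 z.2 * B (z.1.1, z.2.2) (z.2.1, z.1.2))
    (fun z => rfl)
  have lhs : (ptranspose A * B).trace
      = ∑ z : (X × Y) × (X × Y), A (z.2.1, z.1.2) (z.1.1, z.2.2) * B z.2 z.1 := by
    rw [Fintype.sum_prod_type]
    simp only [Matrix.trace, Matrix.diag, Matrix.mul_apply, ptranspose, Matrix.of_apply]
  have rhs : (A * ptranspose B).trace
      = ∑ z : (X × Y) × (X × Y), A z.1 z.2 * B (z.1.1, z.2.2) (z.2.1, z.1.2) := by
    rw [Fintype.sum_prod_type]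
    simp only [Matrix.trace, Matrix.diag, Matrix.mul_apply, ptranspose, Matrix.of_apply]
  rw [lhs, rhs]
  exact key

private lemma ptranspose_MES (d : ℕ) :
    ptranspose (MES d) = (d : ℂ)⁻¹ • swapM (Fin d) := by
  ext p q
  simp only [ptranspose, MES, swapM, Matrix.of_apply, Matrix.smul_apply, smul_eq_mul]
  by_cases h : p.1 = q.2 ∧ p.2 = q.1
  · rw [if_pos ⟨h.2.symm, h.1⟩, if_pos h, mul_one]
  · rw [if_neg (by tauto), if_neg h, mul_zero]


private lemma MES_eq_smul (d : ℕ) :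
    MES d = ((d : ℝ)⁻¹ : ℂ) •
      ((Matrix.of fun (_ : Fin 1) (p : Fin d × Fin d) => if p.1 = p.2 then (1:ℂ) else 0)ᴴ *
       (Matrix.of fun (_ : Fin 1) (p : Fin d × Fin d) => if p.1 = p.2 then (1:ℂ) else 0)) := by
  ext p q
  simp only [MES, Matrix.of_apply, Matrix.smul_apply, Matrix.mul_apply,
    Matrix.conjTranspose_apply, smul_eq_mul]
  rw [Finset.sum_eq_single (0 : Fin 1) (fun b _ hb => absurd (Subsingleton.elim b 0) hb)
    (fun h => absurd (Finset.mem_univ 0) h)]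
  push_cast
  split_ifs with h1 h2 h2 <;> simp_all <;> tauto

private lemma MES_psd (d : ℕ) : (MES d).PosSemidef := by
  have h := psdSmulReal (n := Fin d × Fin d) (inv_nonneg.2 (Nat.cast_nonneg d))
    (Matrix.posSemidef_conjTranspose_mul_self
      (Matrix.of fun (_ : Fin 1) (p : Fin d × Fin d) => if p.1 = p.2 then (1:ℂ) else 0))
  rw [Complex.ofReal_inv] at h
  rw [← MES_eq_smul d] at h
  exact h

private lemma MES_trace (d : ℕ) (hd : 0 < d) : (MES d).trace = 1 := by
  rw [Matrix.trace]
  simp only [Matrix.diag, MES, Matrix.of_apply, and_self]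
  rw [Fintype.sum_prod_type]
  simp only [Finset.sum_ite_eq, Finset.mem_univ, if_true]
  rw [Finset.sum_const, Finset.card_univ, Fintype.card_fin, nsmul_eq_mul]
  have : (d : ℂ) ≠ 0 := by exact_mod_cast hd.ne'
  field_simp

private lemma measBound (d : ℕ) (hd : 0 < d) (m : ℕ)
    (M : Fin m → Matrix (Fin d × Fin d) (Fin d × Fin d) ℂ)
    (hpovm : IsPOVM M) (hppt : ∀ x, (ptranspose (M x)).PosSemidef) :
    klDiv2 (mProb M (MES d))
        (mProb M (((d : ℂ) + 1)⁻¹ • MES d +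
          ((d : ℂ) * ((d : ℂ) + 1))⁻¹ • (1 : Matrix (Fin d × Fin d) (Fin d × Fin d) ℂ)))
      ≤ ENNReal.ofReal (Real.logb 2 (((d : ℝ) + 1) / 2)) := by
  obtain ⟨hpsd, hsum⟩ := hpovm
  have hdR : (0:ℝ) < d := by exact_mod_cast hd
  set σ : Matrix (Fin d × Fin d) (Fin d × Fin d) ℂ :=
    ((d : ℂ) + 1)⁻¹ • MES d +
      ((d : ℂ) * ((d : ℂ) + 1))⁻¹ • (1 : Matrix (Fin d × Fin d) (Fin d × Fin d) ℂ) with hσ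
  set P : Fin m → ℝ := mProb M (MES d) with hPdef
  set Q : Fin m → ℝ := mProb M σ with hQdef
  have hP0 : ∀ x, 0 ≤ P x := fun x => psdTraceMulRe (MES_psd d) (hpsd x)
  have htr0 : ∀ x, 0 ≤ ((M x).trace).re := fun x => psdTraceRe (hpsd x)
  have hkey : ∀ x, (d : ℝ) * P x ≤ ((M x).trace).re := by
    intro x
    have h1 : (MES d * M x).trace
        = ((d : ℝ)⁻¹ : ℂ) * (swapM (Fin d) * ptranspose (M x)).trace := by
      have h0 : (ptranspose (MES d) * ptranspose (M x)).trace
          = (MES d * ptranspose (ptranspose (M x))).trace := trace_ptranspose_mul _ _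
      rw [ptranspose_ptranspose, ptranspose_MES] at h0
      rw [← h0, Matrix.smul_mul, Matrix.trace_smul, smul_eq_mul]
      push_cast
      ring
    have h2 : P x = (d : ℝ)⁻¹ * ((swapM (Fin d) * ptranspose (M x)).trace).re := by
      show ((MES d * M x).trace).re = _
      rw [h1, ← Complex.ofReal_inv, Complex.re_ofReal_mul]
    have h3 := reTraceSwapMul_le (hppt x)
    rw [trace_ptranspose] at h3
    rw [h2, ← mul_assoc, mul_inv_cancel₀ hdR.ne', one_mul]
    exact h3
  have hQ : ∀ x, Q x = ((d : ℝ) + 1)⁻¹ * P x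
      + ((d : ℝ) * ((d : ℝ) + 1))⁻¹ * ((M x).trace).re := by
    intro x
    show ((σ * M x).trace).re = _
    rw [hσ, Matrix.add_mul, Matrix.smul_mul, Matrix.smul_mul, Matrix.one_mul,
      Matrix.trace_add, Matrix.trace_smul, Matrix.trace_smul, smul_eq_mul, smul_eq_mul,
      Complex.add_re,
      show ((d : ℂ) + 1)⁻¹ = ((((d : ℝ) + 1)⁻¹ : ℝ) : ℂ) by push_cast; ring,
      show ((d : ℂ) * ((d : ℂ) + 1))⁻¹ = ((((d : ℝ) * ((d : ℝ) + 1))⁻¹ : ℝ) : ℂ) by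
        push_cast; ring,
      Complex.re_ofReal_mul, Complex.re_ofReal_mul]
    rfl
  have hQlb : ∀ x, 2 * P x / ((d : ℝ) + 1) ≤ Q x := by
    intro x
    have h4 : ((d : ℝ) * ((d : ℝ) + 1))⁻¹ * ((d : ℝ) * P x)
        ≤ ((d : ℝ) * ((d : ℝ) + 1))⁻¹ * ((M x).trace).re :=
      mul_le_mul_of_nonneg_left (hkey x) (by positivity)
    have e1 : ((d : ℝ) * ((d : ℝ) + 1))⁻¹ * ((d : ℝ) * P x) = P x / ((d : ℝ) + 1) := by
      field_simp
    rw [e1] at h4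
    rw [hQ x]
    have e2 : ((d : ℝ) + 1)⁻¹ * P x = P x / ((d : ℝ) + 1) := by ring
    rw [e2] at *
    have : 2 * P x / ((d : ℝ) + 1) = P x / ((d : ℝ) + 1) + P x / ((d : ℝ) + 1) := by ring
    rw [this]
    linarith
  have hsupp : ∀ x, Q x = 0 → P x = 0 := by
    intro x hx
    have h5 := hQlb x
    rw [hx, div_le_iff₀ (by linarith : (0:ℝ) < (d : ℝ) + 1)] at h5
    have := hP0 x
    linarith
  have hsumP : ∑ x, P x = 1 := by
    have h6 : ∑ x, (MES d * M x).trace = (MES d * ∑ x, M x).trace := by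
      rw [Finset.mul_sum, Matrix.trace_sum]
    rw [hsum, Matrix.mul_one, MES_trace d hd] at h6
    have : ∑ x, P x = (∑ x, (MES d * M x).trace).re := by
      rw [Complex.re_sum]; rfl
    rw [this, h6, Complex.one_re]
  show klDiv2 P Q ≤ _
  rw [klDiv2, if_pos hsupp]
  apply ENNReal.ofReal_le_ofReal
  calc ∑ x, P x * Real.logb 2 (P x / Q x)
      ≤ ∑ x, P x * Real.logb 2 (((d : ℝ) + 1) / 2) := by
        apply Finset.sum_le_sum
        intro x _
        by_cases hx : P x = 0
        · simp [hx]
        · have hPpos : 0 < P x := (hP0 x).lt_of_ne (Ne.symm hx)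
          have hQpos : 0 < Q x :=
            lt_of_lt_of_le (div_pos (by linarith) (by linarith)) (hQlb x)
          have hratio : P x / Q x ≤ ((d : ℝ) + 1) / 2 := by
            rw [div_le_div_iff₀ hQpos (by norm_num)]
            have h5 := hQlb x
            rw [div_le_iff₀ (by linarith : (0:ℝ) < (d : ℝ) + 1)] at h5
            linarith
          exact mul_le_mul_of_nonneg_left
            (Real.logb_le_logb_of_le (by norm_num) (div_pos hPpos hQpos) hratio) (hP0 x)
    _ = Real.logb 2 (((d : ℝ) + 1) / 2) := by
        rw [← Finset.sum_mul, hsumP, one_mul]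


private lemma isSeparable_of_fintype {X Y : Type} [Fintype X] [DecidableEq X]
    [Fintype Y] [DecidableEq Y] {ι : Type} [Fintype ι]
    (σ : Matrix (X × Y) (X × Y) ℂ) (p : ι → ℝ)
    (ρ1 : ι → Matrix X X ℂ) (ρ2 : ι → Matrix Y Y ℂ)
    (h0 : ∀ i, 0 ≤ p i) (h1 : ∑ i, p i = 1)
    (hs1 : ∀ i, IsState (ρ1 i)) (hs2 : ∀ i, IsState (ρ2 i))
    (heq : σ = ∑ i, (p i : ℂ) • (ρ1 i ⊗ₖ ρ2 i)) : IsSeparable σ := by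
  refine ⟨Fintype.card ι, fun i => p ((Fintype.equivFin ι).symm i),
    fun i => ρ1 ((Fintype.equivFin ι).symm i), fun i => ρ2 ((Fintype.equivFin ι).symm i),
    fun i => h0 _, ?_, fun i => hs1 _, fun i => hs2 _, ?_⟩
  · rw [Equiv.sum_comp (Fintype.equivFin ι).symm p]; exact h1
  · rw [heq]
    exact (Equiv.sum_comp (Fintype.equivFin ι).symm
      (fun i => (p i : ℂ) • (ρ1 i ⊗ₖ ρ2 i))).symm

private def chi (a : ZMod 4) : ℂ := Complex.I ^ a.val

private lemma chi_conj_mul (a : ZMod 4) : (starRingEnd ℂ) (chi a) * chi a = 1 := by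
  rw [chi, map_pow, ← mul_pow]
  simp [Complex.conj_I]

private lemma chi_mul_conj (a : ZMod 4) : chi a * (starRingEnd ℂ) (chi a) = 1 := by
  rw [mul_comm]; exact chi_conj_mul a

private lemma I_pow_mod_four (n : ℕ) : Complex.I ^ (n % 4) = Complex.I ^ n := by
  conv_rhs => rw [← Nat.div_add_mod n 4]
  rw [pow_add, pow_mul, Complex.I_pow_four, one_pow, one_mul]

private lemma chi_add_one (a : ZMod 4) : chi (a + 1) = Complex.I * chi a := by
  rw [chi, chi, ZMod.val_add, I_pow_mod_four]
  have : (1 : ZMod 4).val = 1 := rfl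
  rw [this, pow_add, pow_one, mul_comm]

private lemma chi_shift {d : ℕ} (c : Fin d → ZMod 4) (r s : Fin d) :
    chi ((c + Pi.single r 1 : Fin d → ZMod 4) s) = (if s = r then Complex.I else 1) * chi (c s) := by
  by_cases h : s = r
  · subst h; simp [Pi.single_apply, chi_add_one]
  · simp [Pi.single_apply, h]

private lemma chi_shift_conj {d : ℕ} (c : Fin d → ZMod 4) (r s : Fin d) :
    (starRingEnd ℂ) (chi ((c + Pi.single r 1 : Fin d → ZMod 4) s))
      = (if s = r then -Complex.I else 1) * (starRingEnd ℂ) (chi (c s)) := by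
  rw [chi_shift]
  by_cases h : s = r <;> simp [h, Complex.conj_I]

private def S4 (d : ℕ) (j k l m : Fin d) : ℂ :=
  ∑ c : Fin d → ZMod 4,
    (starRingEnd ℂ) (chi (c j)) * chi (c l) * (chi (c k) * (starRingEnd ℂ) (chi (c m)))

private lemma S4_shift {d : ℕ} (j k l m r : Fin d) :
    S4 d j k l m = ((if j = r then -Complex.I else 1) * (if l = r then Complex.I else 1) *
      ((if k = r then Complex.I else 1) * (if m = r then -Complex.I else 1))) * S4 d j k l m := by
  set μ := (if j = r then -Complex.I else 1) * (if l = r then Complex.I else 1) *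
      ((if k = r then Complex.I else 1) * (if m = r then -Complex.I else 1)) with hμ
  have key : ∀ c : Fin d → ZMod 4,
      (starRingEnd ℂ) (chi ((c + Pi.single r 1 : Fin d → ZMod 4) j)) * chi ((c + Pi.single r 1 : Fin d → ZMod 4) l) *
        (chi ((c + Pi.single r 1 : Fin d → ZMod 4) k) * (starRingEnd ℂ) (chi ((c + Pi.single r 1 : Fin d → ZMod 4) m)))
      = μ * ((starRingEnd ℂ) (chi (c j)) * chi (c l) *
          (chi (c k) * (starRingEnd ℂ) (chi (c m)))) := by
    intro c
    rw [chi_shift_conj, chi_shift_conj, chi_shift, chi_shift, hμ]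
    ring
  calc S4 d j k l m
      = ∑ c : Fin d → ZMod 4,
          (starRingEnd ℂ) (chi ((c + Pi.single r 1 : Fin d → ZMod 4) j)) * chi ((c + Pi.single r 1 : Fin d → ZMod 4) l) *
            (chi ((c + Pi.single r 1 : Fin d → ZMod 4) k) * (starRingEnd ℂ) (chi ((c + Pi.single r 1 : Fin d → ZMod 4) m))) := by
        rw [S4]
        exact (Equiv.sum_comp (Equiv.addRight (Pi.single r 1 : Fin d → ZMod 4))
          (fun c => (starRingEnd ℂ) (chi (c j)) * chi (c l) *
            (chi (c k) * (starRingEnd ℂ) (chi (c m))))).symm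
    _ = ∑ c : Fin d → ZMod 4, μ * ((starRingEnd ℂ) (chi (c j)) * chi (c l) *
          (chi (c k) * (starRingEnd ℂ) (chi (c m)))) := Finset.sum_congr rfl fun c _ => key c
    _ = μ * S4 d j k l m := by rw [← Finset.mul_sum, S4]

private lemma S4_zero_of {d : ℕ} (j k l m r : Fin d) (μ : ℂ) (hμ : μ ≠ 1)
    (hc : (if j = r then -Complex.I else 1) * (if l = r then Complex.I else 1) *
      ((if k = r then Complex.I else 1) * (if m = r then -Complex.I else 1)) = μ) :
    S4 d j k l m = 0 := by
  have h := S4_shift j k l m r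
  rw [hc] at h
  have h2 : (1 - μ) * S4 d j k l m = 0 := by linear_combination h
  rcases mul_eq_zero.1 h2 with h3 | h3
  · exact absurd (by linear_combination -h3) hμ
  · exact h3

private lemma S4_eq (d : ℕ) (j k l m : Fin d) :
    S4 d j k l m = if (j = k ∧ l = m) ∨ (j = l ∧ k = m) then ((4 : ℂ) ^ d) else 0 := by
  by_cases h : (j = k ∧ l = m) ∨ (j = l ∧ k = m)
  · rw [if_pos h]
    have hone : ∀ c : Fin d → ZMod 4,
        (starRingEnd ℂ) (chi (c j)) * chi (c l) *
          (chi (c k) * (starRingEnd ℂ) (chi (c m))) = 1 := by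
      intro c
      rcases h with ⟨hjk, hlm⟩ | ⟨hjl, hkm⟩
      · subst hjk; subst hlm
        calc (starRingEnd ℂ) (chi (c j)) * chi (c l) *
              (chi (c j) * (starRingEnd ℂ) (chi (c l)))
            = ((starRingEnd ℂ) (chi (c j)) * chi (c j)) *
              (chi (c l) * (starRingEnd ℂ) (chi (c l))) := by ring
          _ = 1 := by rw [chi_conj_mul, chi_mul_conj, one_mul]
      · subst hjl; subst hkm
        calc (starRingEnd ℂ) (chi (c j)) * chi (c j) *
              (chi (c k) * (starRingEnd ℂ) (chi (c k)))
            = ((starRingEnd ℂ) (chi (c j)) * chi (c j)) *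
              (chi (c k) * (starRingEnd ℂ) (chi (c k))) := by ring
          _ = 1 := by rw [chi_conj_mul, chi_mul_conj, one_mul]
    rw [S4, Finset.sum_congr rfl fun c _ => hone c, Finset.sum_const, Finset.card_univ,
      nsmul_eq_mul, mul_one]
    rw [Fintype.card_fun]
    simp
  · rw [if_neg h]
    push_neg at h
    obtain ⟨hP, hQ⟩ := h
    by_cases hjk : j = k
    · have hlm : l ≠ m := hP hjk
      refine S4_zero_of j k l m l Complex.I (by norm_num [Complex.ext_iff]) ?_
      subst hjk
      rw [if_pos rfl, if_neg (fun h' : m = l => hlm h'.symm)]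
      by_cases hjl : j = l <;> simp [hjl] <;> ring_nf <;>
        simp [Complex.I_sq, pow_succ, Complex.I_mul_I]
    · by_cases hlm : l = m
      · refine S4_zero_of j k l m j (-Complex.I) (by norm_num [Complex.ext_iff]) ?_
        subst hlm
        rw [if_pos rfl, if_neg (fun h' : k = j => hjk h'.symm)]
        by_cases hlj : l = j <;> simp [hlj] <;> ring_nf <;>
          simp [Complex.I_sq, pow_succ, Complex.I_mul_I]
      · by_cases hjl : j = l
        · have hkm : k ≠ m := hQ hjl
          refine S4_zero_of j k l m k Complex.I (by norm_num [Complex.ext_iff]) ?_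
          subst hjl
          rw [if_neg (fun h' : j = k => hjk h'), if_neg (fun h' : j = k => hjk h'),
            if_pos rfl, if_neg (fun h' : m = k => hkm h'.symm)]
          ring
        · by_cases hmj : m = j
          · refine S4_zero_of j k l m j (-1 : ℂ) (by norm_num [Complex.ext_iff]) ?_
            rw [if_pos rfl, if_neg (fun h' : l = j => hjl h'.symm),
              if_neg (fun h' : k = j => hjk h'.symm), if_pos hmj]
            ring_nf
            simp [Complex.I_sq, pow_succ, Complex.I_mul_I]
          · refine S4_zero_of j k l m j (-Complex.I) (by norm_num [Complex.ext_iff]) ?_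
            rw [if_pos rfl, if_neg (fun h' : l = j => hjl h'.symm),
              if_neg (fun h' : k = j => hjk h'.symm), if_neg hmj]
            ring


private def vA (d : ℕ) (c : Fin d → ZMod 4) : Matrix (Fin d) (Fin d) ℂ :=
  Matrix.of fun j l => (d : ℂ)⁻¹ * ((starRingEnd ℂ) (chi (c j)) * chi (c l))

private def vB (d : ℕ) (c : Fin d → ZMod 4) : Matrix (Fin d) (Fin d) ℂ :=
  Matrix.of fun k m => (d : ℂ)⁻¹ * (chi (c k) * (starRingEnd ℂ) (chi (c m)))

private def eM (d : ℕ) (j : Fin d) : Matrix (Fin d) (Fin d) ℂ :=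
  Matrix.of fun a b => if a = j ∧ b = j then 1 else 0

private lemma cast_d_inv (d : ℕ) : ((d : ℂ))⁻¹ = (((d : ℝ)⁻¹ : ℝ) : ℂ) := by
  push_cast
  ring

private lemma vA_state (d : ℕ) (hd : 0 < d) (c : Fin d → ZMod 4) : IsState (vA d c) := by
  have hd' : ((d : ℂ)) ≠ 0 := by exact_mod_cast hd.ne'
  constructor
  · have heq : vA d c = (((d : ℝ)⁻¹ : ℝ) : ℂ) •
        ((Matrix.of fun (_ : Fin 1) (j : Fin d) => chi (c j))ᴴ *
         (Matrix.of fun (_ : Fin 1) (j : Fin d) => chi (c j))) := by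
      ext j l
      simp only [vA, Matrix.of_apply, Matrix.smul_apply, Matrix.mul_apply,
        Matrix.conjTranspose_apply, smul_eq_mul, Finset.univ_unique, Finset.sum_singleton]
      rw [← cast_d_inv]
      rfl
    rw [heq]
    exact psdSmulReal (inv_nonneg.2 (Nat.cast_nonneg d))
      (Matrix.posSemidef_conjTranspose_mul_self _)
  · rw [Matrix.trace]
    simp only [Matrix.diag, vA, Matrix.of_apply]
    rw [Finset.sum_congr rfl (fun j _ => by rw [chi_conj_mul (c j), mul_one])]
    rw [Finset.sum_const, Finset.card_univ, Fintype.card_fin, nsmul_eq_mul]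
    field_simp

private lemma vB_state (d : ℕ) (hd : 0 < d) (c : Fin d → ZMod 4) : IsState (vB d c) := by
  have hd' : ((d : ℂ)) ≠ 0 := by exact_mod_cast hd.ne'
  constructor
  · have heq : vB d c = (((d : ℝ)⁻¹ : ℝ) : ℂ) •
        ((Matrix.of fun (_ : Fin 1) (k : Fin d) => (starRingEnd ℂ) (chi (c k)))ᴴ *
         (Matrix.of fun (_ : Fin 1) (k : Fin d) => (starRingEnd ℂ) (chi (c k)))) := by
      ext k m
      simp only [vB, Matrix.of_apply, Matrix.smul_apply, Matrix.mul_apply,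
        Matrix.conjTranspose_apply, smul_eq_mul, Finset.univ_unique, Finset.sum_singleton,
        Complex.conj_conj]
      rw [← cast_d_inv]
      rw [show (star ((starRingEnd ℂ) (chi (c k))) : ℂ) = chi (c k) from Complex.conj_conj _]
    rw [heq]
    exact psdSmulReal (inv_nonneg.2 (Nat.cast_nonneg d))
      (Matrix.posSemidef_conjTranspose_mul_self _)
  · rw [Matrix.trace]
    simp only [Matrix.diag, vB, Matrix.of_apply]
    rw [Finset.sum_congr rfl (fun k _ => by rw [chi_mul_conj (c k), mul_one])]
    rw [Finset.sum_const, Finset.card_univ, Fintype.card_fin, nsmul_eq_mul]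
    field_simp

private lemma eM_state (d : ℕ) (j : Fin d) : IsState (eM d j) := by
  constructor
  · have heq : eM d j =
        ((Matrix.of fun (_ : Fin 1) (a : Fin d) => if a = j then (1:ℂ) else 0)ᴴ *
         (Matrix.of fun (_ : Fin 1) (a : Fin d) => if a = j then (1:ℂ) else 0)) := by
      ext a b
      simp only [eM, Matrix.of_apply, Matrix.mul_apply, Matrix.conjTranspose_apply,
        Finset.univ_unique, Finset.sum_singleton]
      split_ifs with h1 h2 h3 h2 h3 <;> simp_all <;> tauto
    rw [heq]
    exact Matrix.posSemidef_conjTranspose_mul_self _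
  · rw [Matrix.trace]
    simp only [Matrix.diag, eM, Matrix.of_apply, and_self]
    simp [Finset.sum_ite_eq]


private lemma isoSep_separable (d : ℕ) (hd : 0 < d) :
    IsSeparable (((d : ℂ) + 1)⁻¹ • MES d +
      ((d : ℂ) * ((d : ℂ) + 1))⁻¹ • (1 : Matrix (Fin d × Fin d) (Fin d × Fin d) ℂ)) := by
  have hdR : (0:ℝ) < d := by exact_mod_cast hd
  have hdC : ((d:ℂ)) ≠ 0 := by exact_mod_cast hd.ne'
  have hd1C : ((d:ℂ)) + 1 ≠ 0 := by
    intro h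
    have := congrArg Complex.re h
    simp at this
    linarith
  have h4C : ((4:ℂ))^d ≠ 0 := pow_ne_zero _ (by norm_num)
  apply isSeparable_of_fintype (ι := (Fin d → ZMod 4) ⊕ Fin d) _
    (Sum.elim (fun _ => (d : ℝ) / (((d:ℝ) + 1) * 4 ^ d)) (fun _ => ((d:ℝ) * ((d:ℝ) + 1))⁻¹))
    (Sum.elim (vA d) (eM d)) (Sum.elim (vB d) (eM d))
  · rintro (c | j) <;> simp <;> positivity
  · rw [Fintype.sum_sum_type]
    simp only [Sum.elim_inl, Sum.elim_inr]
    rw [Finset.sum_const, Finset.sum_const, Finset.card_univ, Finset.card_univ,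
      Fintype.card_fun, ZMod.card, Fintype.card_fin, nsmul_eq_mul, nsmul_eq_mul]
    push_cast
    field_simp
  · rintro (c | j)
    · exact vA_state d hd c
    · exact eM_state d j
  · rintro (c | j)
    · exact vB_state d hd c
    · exact eM_state d j
  · ext ⟨j, k⟩ ⟨l, m⟩
    rw [Matrix.sum_apply, Fintype.sum_sum_type]
    simp only [Sum.elim_inl, Sum.elim_inr, Matrix.smul_apply, smul_eq_mul]
    have hsum1 : ∑ c : Fin d → ZMod 4,
        (((d : ℝ) / (((d:ℝ) + 1) * 4 ^ d) : ℝ) : ℂ) * ((vA d c ⊗ₖ vB d c) (j, k) (l, m))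
        = (((d : ℝ) / (((d:ℝ) + 1) * 4 ^ d) : ℝ) : ℂ) * ((d:ℂ)⁻¹ * (d:ℂ)⁻¹)
            * S4 d j k l m := by
      rw [S4, mul_assoc, Finset.mul_sum, Finset.mul_sum]
      apply Finset.sum_congr rfl
      intro c _
      simp only [Matrix.kroneckerMap_apply, vA, vB, Matrix.of_apply]
      ring
    have hsum2 : ∑ j' : Fin d,
        ((((d:ℝ) * ((d:ℝ) + 1))⁻¹ : ℝ) : ℂ) * ((eM d j' ⊗ₖ eM d j') (j, k) (l, m))
        = if j = l ∧ k = m ∧ j = k then ((((d:ℝ) * ((d:ℝ) + 1))⁻¹ : ℝ) : ℂ) else 0 := by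
      simp only [Matrix.kroneckerMap_apply, eM, Matrix.of_apply]
      by_cases h : j = l ∧ k = m ∧ j = k
      · obtain ⟨h1, h2, h3⟩ := h
        rw [if_pos ⟨h1, h2, h3⟩]
        rw [Finset.sum_eq_single j]
        · rw [if_pos ⟨rfl, h1.symm⟩, if_pos ⟨h3.symm, (h3.trans h2).symm⟩]
          ring
        · intro b _ hb
          rw [if_neg (fun hc : j = b ∧ l = b => hb hc.1.symm)]
          ring
        · intro hj; exact absurd (Finset.mem_univ j) hj
      · rw [if_neg h]
        apply Finset.sum_eq_zero
        intro j' _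
        by_cases h1 : j = j' ∧ l = j'
        · by_cases h2 : k = j' ∧ m = j'
          · exact absurd ⟨h1.1.trans h1.2.symm, h2.1.trans h2.2.symm,
              h1.1.trans h2.1.symm⟩ h
          · rw [if_neg h2]; ring
        · rw [if_neg h1]; ring
    rw [hsum1, hsum2, S4_eq]
    simp only [Matrix.add_apply, Matrix.smul_apply, MES, Matrix.of_apply,
      Matrix.one_apply, smul_eq_mul, Prod.mk.injEq]
    push_cast
    by_cases hP : j = k ∧ l = m <;> by_cases hQ : j = l ∧ k = m
    · rw [if_pos ⟨hP.1, hP.2⟩, if_pos ⟨hQ.1, hQ.2⟩, if_pos (Or.inl hP),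
        if_pos ⟨hQ.1, hQ.2, hP.1⟩]
      field_simp
    · have : ¬(j = l ∧ k = m ∧ j = k) := fun hc => hQ ⟨hc.1, hc.2.1⟩
      rw [if_pos ⟨hP.1, hP.2⟩, if_neg hQ, if_pos (Or.inl hP), if_neg this]
      field_simp
      ring
    · have hjk : ¬ j = k := fun h => hP ⟨h, hQ.1.symm.trans (h.trans hQ.2)⟩
      rw [if_neg hP, if_pos ⟨hQ.1, hQ.2⟩, if_pos (Or.inr hQ),
        if_neg (fun hc : j = l ∧ k = m ∧ j = k => hjk hc.2.2)]
      field_simp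
      ring
    · have h1 : ¬(j = k ∧ l = m) := hP
      have h2 : ¬(j = l ∧ k = m ∧ j = k) := fun hc => hQ ⟨hc.1, hc.2.1⟩
      rw [if_neg hP, if_neg hQ, if_neg (not_or.2 ⟨hP, hQ⟩), if_neg h2]
      ring

end AuxPPT



/-- Upper bound part of Proposition 4: against the separable isotropic state
σ = (1/(d+1))Φ_d + (d/(d+1))·(1/d²)·1, every PPT measurement yields relative
entropy at most log((d+1)/2); hence E_{r,PPT}(Φ_d) ≤ log(d+1) − 1. -/
theorem ErPPT_MES_upperBound (d : ℕ) (hd : 0 < d) :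
    (∀ (m : ℕ) (M : Fin m → Matrix (Fin d × Fin d) (Fin d × Fin d) ℂ),
      IsPOVM M → (∀ x, (ptranspose (M x)).PosSemidef) →
      klDiv2 (mProb M (MES d))
             (mProb M (((d : ℂ) + 1)⁻¹ • MES d +
                ((d : ℂ) * ((d : ℂ) + 1))⁻¹ • (1 : Matrix (Fin d × Fin d) (Fin d × Fin d) ℂ)))
        ≤ ENNReal.ofReal (Real.logb 2 (((d : ℝ) + 1) / 2))) ∧
    ErPPT (MES d) ≤ ENNReal.ofReal (Real.logb 2 ((d : ℝ) + 1) - 1) := by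
  have hlogeq : Real.logb 2 (((d : ℝ) + 1) / 2) = Real.logb 2 ((d : ℝ) + 1) - 1 := by
    have hd1 : ((d : ℝ) + 1) ≠ 0 := by positivity
    rw [Real.logb_div hd1 (by norm_num), Real.logb_self_eq_one (by norm_num)]
  refine ⟨fun m M hpovm hppt => measBound d hd m M hpovm hppt, ?_⟩
  have h1 : ErPPT (MES d) ≤
      ⨆ (m : ℕ) (M : Fin m → Matrix (Fin d × Fin d) (Fin d × Fin d) ℂ)
        (_ : IsPOVM M ∧ ∀ x, (ptranspose (M x)).PosSemidef),
        klDiv2 (mProb M (MES d))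
          (mProb M (((d : ℂ) + 1)⁻¹ • MES d +
            ((d : ℂ) * ((d : ℂ) + 1))⁻¹ • (1 : Matrix (Fin d × Fin d) (Fin d × Fin d) ℂ))) :=
    iInf₂_le _ (isoSep_separable d hd)
  refine h1.trans ?_
  rw [← hlogeq]
  apply iSup_le; intro m
  apply iSup_le; intro M
  apply iSup_le; intro hM
  exact measBound d hd m M hM.1 hM.2
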